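/- For every ε > 0 there exist L > 0 and δ > 0 with the following property. Let H ⊂ R² be a hinge of angle α ≥ π − δ with vertex p, and let γ: [0,∞) → R² be one of the two rays bounding H (so γ(0) = p). Then for every s > 0 there exists a Jordan curve T_s ⊂ H with Jordan domain J_s such that: (1) T_s contains the initial segment γ([0,s]) of γ; (2) ℓ(T_s) ≤ L·s; (3) ℓ(T_s) − √(4π·H²(J_s)) < ε·s. -/

import Mathlib

noncomputable section

open Set Metric MeasureTheory
open scoped ENNReal NNReal Topology

namespace IsoCat

/-- The Euclidean plane. -/
abbrev E2 : Type := EuclideanSpace ℝ (Fin 2)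

/-- Euclidean three-space. -/
abbrev E3 : Type := EuclideanSpace ℝ (Fin 3)

/-- The unit circle `S¹ ⊆ ℝ²`. -/
def unitCircle : Set E2 := Metric.sphere 0 1

/-- The closed unit disc `D̄ ⊆ ℝ²`. -/
def closedDisc : Set E2 := Metric.closedBall 0 1

/-- The open unit disc `D ⊆ ℝ²`. -/
def openDisc : Set E2 := Metric.ball 0 1

/-- The closed half plane in `ℝ²`. -/
def halfPlane : Set E2 := {p : E2 | 0 ≤ p 0}

/-- The point of `ℝ²` with coordinates `(a, b)`. -/
def ePt (a b : ℝ) : E2 := WithLp.toLp 2 ![a, b]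

/-- The standard (arclength) parametrization of the unit circle. -/
def circlePt (t : ℝ) : ↥unitCircle :=
  ⟨ePt (Real.cos t) (Real.sin t), by
    have hn : ‖ePt (Real.cos t) (Real.sin t)‖ = 1 := by
      rw [EuclideanSpace.norm_eq, Fin.sum_univ_two]
      show Real.sqrt (‖Real.cos t‖ ^ 2 + ‖Real.sin t‖ ^ 2) = 1
      rw [Real.norm_eq_abs, Real.norm_eq_abs, sq_abs, sq_abs, Real.cos_sq_add_sin_sq,
        Real.sqrt_one]
    simpa [unitCircle, mem_sphere_iff_norm] using hn⟩

/-- The inclusion of the unit circle into the closed unit disc. -/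
def bdIncl : ↥unitCircle → ↥closedDisc := Set.inclusion Metric.sphere_subset_closedBall

variable {X : Type*}

/-- The total variation (length) of the restriction of the curve `γ` to the set `s`, with
respect to the distance function `ρ`, given by the supremum over all partitions of the sums of
distances of consecutive points.  (This is `eVariationOn` for a raw distance function.) -/
def rawVar (ρ : X → X → ℝ≥0∞) (γ : ℝ → X) (s : Set ℝ) : ℝ≥0∞ :=
  ⨆ p : ℕ × { u : ℕ → ℝ // Monotone u ∧ ∀ i, u i ∈ s },
    ∑ i ∈ Finset.range p.1, ρ (γ (p.2.1 (i + 1))) (γ (p.2.1 i))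

/-- The length of the closed curve `γ : S¹ → X` with respect to the distance function `ρ`. -/
def closedLen (ρ : X → X → ℝ≥0∞) (γ : ↥unitCircle → X) : ℝ≥0∞ :=
  rawVar ρ (fun t => γ (circlePt t)) (Icc 0 (2 * Real.pi))

/-- `u` is a Lipschitz map with respect to the distance function `ρ` on the target. -/
def IsLipMapW (ρ : X → X → ℝ≥0∞) {α : Type*} [PseudoEMetricSpace α] (u : α → X) : Prop :=
  ∃ K : ℝ≥0, ∀ a b : α, ρ (u a) (u b) ≤ (K : ℝ≥0∞) * edist a b

/-- The diameter of a set with respect to the distance function `ρ`. -/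
def rdiam (ρ : X → X → ℝ≥0∞) (s : Set X) : ℝ≥0∞ := ⨆ x ∈ s, ⨆ y ∈ s, ρ x y

/-- The `2`-dimensional Hausdorff measure of a set with respect to the distance function `ρ`,
normalized (by the factor `π/4`, the area of a disc of diameter one) so that it coincides with
the Lebesgue measure on the Euclidean plane. -/
def rmu2 (ρ : X → X → ℝ≥0∞) (S : Set X) : ℝ≥0∞ :=
  ⨆ (ε : ℝ≥0∞) (_ : 0 < ε),
    ⨅ (t : ℕ → Set X) (_ : S ⊆ ⋃ n, t n) (_ : ∀ n, rdiam ρ (t n) ≤ ε),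
      ∑' n, ENNReal.ofReal (Real.pi / 4) * rdiam ρ (t n) ^ 2

/-- The parametrized (Hausdorff) area of a map `u : D̄ → X`:  the integral `∫_X N(x) dH²(x)`
of the multiplicity function `N(x) = #u⁻¹(x)` against the `2`-dimensional Hausdorff measure,
here written via the layer-cake formula `∑_{k ≥ 1} H²({N ≥ k})`. -/
def rarea (ρ : X → X → ℝ≥0∞) (u : ↥closedDisc → X) : ℝ≥0∞ :=
  ∑' k : ℕ, rmu2 ρ {x : X | (k + 1 : ℕ∞) ≤ (u ⁻¹' {x}).encard}

/-- The distance function `ρ` is a (finite-valued) metric. -/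
structure IsMetricW (ρ : X → X → ℝ≥0∞) : Prop where
  finite : ∀ x y, ρ x y ≠ ⊤
  refl : ∀ x, ρ x x = 0
  symm : ∀ x y, ρ x y = ρ y x
  triangle : ∀ x y z, ρ x z ≤ ρ x y + ρ y z
  separates : ∀ x y, ρ x y = 0 → x = y

/-- `γ` restricted to `[a, b]` is a geodesic (an isometric embedding of the interval) with
respect to the distance function `ρ`. -/
def IsGeoW (ρ : X → X → ℝ≥0∞) (γ : ℝ → X) (a b : ℝ) : Prop :=
  ∀ s ∈ Icc a b, ∀ t ∈ Icc a b, ρ (γ s) (γ t) = ENNReal.ofReal |s - t|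

/-- Any two points are joined by a geodesic (with respect to `ρ`). -/
def GeodesicW (ρ : X → X → ℝ≥0∞) : Prop :=
  ∀ x y : X, ∃ L : ℝ, 0 ≤ L ∧ ∃ γ : ℝ → X, IsGeoW ρ γ 0 L ∧ γ 0 = x ∧ γ L = y

/-- Completeness with respect to the distance function `ρ`: every Cauchy sequence converges. -/
def CompleteW (ρ : X → X → ℝ≥0∞) : Prop :=
  ∀ u : ℕ → X,
    (∀ ε : ℝ≥0∞, 0 < ε → ∃ N : ℕ, ∀ m ≥ N, ∀ n ≥ N, ρ (u m) (u n) < ε) →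
    ∃ x : X, ∀ ε : ℝ≥0∞, 0 < ε → ∃ N : ℕ, ∀ n ≥ N, ρ (u n) x < ε

/-- A geodesic triangle with respect to the distance function `ρ`: three vertices `v i`
together with geodesic sides `side i` of lengths `L i` joining them pairwise. -/
structure TriW (ρ : X → X → ℝ≥0∞) where
  v : Fin 3 → X
  L : Fin 3 → ℝ
  side : Fin 3 → ℝ → X
  len_nonneg : ∀ i, 0 ≤ L i
  geo : ∀ i, IsGeoW ρ (side i) 0 (L i)
  src : ∀ i, side i 0 = v i
  tgt : ∀ i, side i (L i) = v (i + 1)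

/-- The point at arclength parameter `s` on the segment from `a` to `b` of length `d`. -/
def cmpPt (a b : E2) (d s : ℝ) : E2 := AffineMap.lineMap a b (s / d)

/-- The geodesic triangle `T` is thin: there is a Euclidean comparison triangle, with the same
side lengths, such that distances between points on the sides of `T` are bounded by the
distances between the corresponding points of the comparison triangle. -/
def TriW.Thin {ρ : X → X → ℝ≥0∞} (T : TriW ρ) : Prop :=
  ∃ w : Fin 3 → E2,
    (∀ i, dist (w i) (w (i + 1)) = T.L i) ∧
    ∀ i j : Fin 3, ∀ s ∈ Icc 0 (T.L i), ∀ t ∈ Icc 0 (T.L j),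
      ρ (T.side i s) (T.side j t) ≤
        edist (cmpPt (w i) (w (i + 1)) (T.L i) s) (cmpPt (w j) (w (j + 1)) (T.L j) t)

/-- `(X, ρ)` is a `CAT(0)` space: a complete geodesic metric space all of whose geodesic
triangles are thin. -/
def IsCAT0W (ρ : X → X → ℝ≥0∞) : Prop :=
  IsMetricW ρ ∧ CompleteW ρ ∧ GeodesicW ρ ∧ ∀ T : TriW ρ, T.Thin

/-- The restriction of the distance function `ρ` to a subset `A` (the induced metric). -/
def restrictW (ρ : X → X → ℝ≥0∞) (A : Set X) : ↥A → ↥A → ℝ≥0∞ := fun a b => ρ a b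

/-- `(X, ρ)` has non-positive curvature: every point has a neighborhood which, with the induced
metric, is a `CAT(0)` space. -/
def NonposCurvW (ρ : X → X → ℝ≥0∞) : Prop :=
  ∀ x : X, ∃ N : Set X,
    (∃ ε : ℝ≥0∞, 0 < ε ∧ {y | ρ x y < ε} ⊆ N) ∧ IsCAT0W (restrictW ρ N)

/-- The induced length distance associated with the distance function `ρ`: the infimum of the
lengths of continuous curves joining two given points. -/
def ILDW [TopologicalSpace X] (ρ : X → X → ℝ≥0∞) (x y : X) : ℝ≥0∞ :=
  ⨅ (γ : ℝ → X) (_ : ContinuousOn γ (Icc 0 1)) (_ : γ 0 = x) (_ : γ 1 = y),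
    rawVar ρ γ (Icc 0 1)

/-- The length of a Jordan curve (a subset homeomorphic to the circle) in a metric space,
computed via injective parametrizations. -/
def setLoopLen {Z : Type*} [MetricSpace Z] (η : Set Z) : ℝ≥0∞ :=
  ⨅ h : ↥unitCircle ≃ₜ ↥η,
    rawVar (fun a b : Z => edist a b) (fun t => (h (circlePt t) : Z)) (Icc 0 (2 * Real.pi))

/-- `X` satisfies the `δ`-isoperimetric inequality (with respect to `ρ`): every Lipschitz
closed curve of length at most `r` bounds a Lipschitz disc of parametrized area at most
`δ (r)`. -/
def SatisfiesIsopW (ρ : X → X → ℝ≥0∞) (δ : ℝ → ℝ≥0∞) : Prop :=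
  ∀ r : ℝ, 0 < r → ∀ γ : ↥unitCircle → X, IsLipMapW ρ γ → closedLen ρ γ ≤ ENNReal.ofReal r →
    ∃ u : ↥closedDisc → X, IsLipMapW ρ u ∧ (∀ t, u (bdIncl t) = γ t) ∧ rarea ρ u ≤ δ r

/-- The Dehn function of `(X, ρ)`: the (pointwise) infimum of all functions `δ` for which `X`
satisfies the `δ`-isoperimetric inequality. -/
def dehnW (ρ : X → X → ℝ≥0∞) : ℝ → ℝ≥0∞ :=
  fun r => ⨅ (δ : ℝ → ℝ≥0∞) (_ : SatisfiesIsopW ρ δ), δ r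

/-- `X` satisfies the Euclidean isoperimetric inequality for curves (with respect to `ρ`):
every Lipschitz closed curve `γ : S¹ → X` extends to a Lipschitz map `u : D̄ → X` whose
parametrized Hausdorff area is at most `ℓ(γ)² / 4π`. -/
def EuclIsopW (ρ : X → X → ℝ≥0∞) : Prop :=
  ∀ γ : ↥unitCircle → X, IsLipMapW ρ γ →
    ∃ u : ↥closedDisc → X, IsLipMapW ρ u ∧ (∀ t, u (bdIncl t) = γ t) ∧
      rarea ρ u ≤ closedLen ρ γ ^ 2 / ENNReal.ofReal (4 * Real.pi)


/-- The standard hinge (circular sector) of angle `α` in `ℝ²` with vertex at the origin. -/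
def sector (α : ℝ) : Set E2 :=
  {q : E2 | ∃ r θ : ℝ, 0 ≤ r ∧ 0 ≤ θ ∧ θ ≤ α ∧ q = ePt (r * Real.cos θ) (r * Real.sin θ)}

section Aux

lemma ePt_zero (a b : ℝ) : ePt a b 0 = a := rfl

lemma ePt_one (a b : ℝ) : ePt a b 1 = b := rfl

lemma ePt_eta (q : E2) : ePt (q 0) (q 1) = q := by
  exact congrArg (WithLp.toLp 2) (funext fun i => by fin_cases i <;> rfl : (![q 0, q 1] : Fin 2 → ℝ) = q.ofLp)

lemma E2_ext {p q : E2} (h0 : p 0 = q 0) (h1 : p 1 = q 1) : p = q := by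
  exact congrArg (WithLp.toLp 2) (funext fun i => by fin_cases i <;> assumption : p.ofLp = q.ofLp)

lemma dist_sq (p q : E2) : dist p q ^ 2 = (p 0 - q 0) ^ 2 + (p 1 - q 1) ^ 2 := by
  rw [EuclideanSpace.dist_eq, Real.sq_sqrt (by positivity)]
  simp [Fin.sum_univ_two, Real.dist_eq, sq_abs]

lemma dist_eq_sqrt (p q : E2) : dist p q = Real.sqrt ((p 0 - q 0) ^ 2 + (p 1 - q 1) ^ 2) := by
  rw [← dist_sq, Real.sqrt_sq dist_nonneg]

lemma sq_le_of_mem_closedBall {q c : E2} {R : ℝ} (h : q ∈ Metric.closedBall c R) :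
    (q 0 - c 0) ^ 2 + (q 1 - c 1) ^ 2 ≤ R ^ 2 := by
  rw [Metric.mem_closedBall] at h
  nlinarith [dist_sq q c, dist_nonneg (x := q) (y := c)]

lemma mem_closedBall_of_sq {q c : E2} {R : ℝ} (hR : 0 ≤ R)
    (h : (q 0 - c 0) ^ 2 + (q 1 - c 1) ^ 2 ≤ R ^ 2) : q ∈ Metric.closedBall c R := by
  rw [Metric.mem_closedBall]
  nlinarith [dist_sq q c, dist_nonneg (x := q) (y := c)]

lemma sq_lt_of_mem_ball {q c : E2} {R : ℝ} (h : q ∈ Metric.ball c R) :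
    (q 0 - c 0) ^ 2 + (q 1 - c 1) ^ 2 < R ^ 2 := by
  rw [Metric.mem_ball] at h
  nlinarith [dist_sq q c, dist_nonneg (x := q) (y := c)]

lemma mem_ball_of_sq {q c : E2} {R : ℝ} (hR : 0 ≤ R)
    (h : (q 0 - c 0) ^ 2 + (q 1 - c 1) ^ 2 < R ^ 2) : q ∈ Metric.ball c R := by
  rw [Metric.mem_ball]
  nlinarith [dist_sq q c, dist_nonneg (x := q) (y := c)]

lemma mem_unitCircle_iff {x : E2} : x ∈ unitCircle ↔ x 0 ^ 2 + x 1 ^ 2 = 1 := by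
  have hz0 : (0 : E2) 0 = 0 := rfl
  have hz1 : (0 : E2) 1 = 0 := rfl
  have h2 : dist x 0 ^ 2 = x 0 ^ 2 + x 1 ^ 2 := by
    rw [dist_sq, hz0, hz1, sub_zero, sub_zero]
  constructor
  · intro h
    rw [unitCircle, Metric.mem_sphere] at h
    rw [h] at h2; linarith [h2]
  · intro h
    rw [unitCircle, Metric.mem_sphere]
    rw [← Real.sqrt_sq (dist_nonneg (x := x) (y := (0 : E2))), h2.trans h, Real.sqrt_one]

/-- The center of the comparison disc. -/
def cen (β R : ℝ) : E2 := ePt (R * Real.sin β) (R * Real.cos β)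

def stdK (β R : ℝ) : Set E2 := Metric.closedBall (cen β R) R ∩ {q : E2 | 0 ≤ q 1}

def stdU (β R : ℝ) : Set E2 := Metric.ball (cen β R) R ∩ {q : E2 | 0 < q 1}

def stdT (β R : ℝ) : Set E2 := stdK β R \ stdU β R

/-- Fold-of-circle parametrization map. -/
def pmap (β R : ℝ) (q : E2) : E2 :=
  ePt (R * Real.sin β + R * q 0) (max (R * Real.cos β + R * q 1) 0)

lemma cen_zero (β R : ℝ) : cen β R 0 = R * Real.sin β := rfl
lemma cen_one (β R : ℝ) : cen β R 1 = R * Real.cos β := rfl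

section Std

variable {β R : ℝ}

lemma cos_pos_of_le_half (hβ0 : 0 < β) (hβ1 : β ≤ 1 / 2) : 0 < Real.cos β := by
  apply Real.cos_pos_of_mem_Ioo
  constructor <;> nlinarith [Real.pi_gt_three]

lemma sin_pos_of_le_half (hβ0 : 0 < β) (hβ1 : β ≤ 1 / 2) : 0 < Real.sin β := by
  apply Real.sin_pos_of_pos_of_lt_pi hβ0
  nlinarith [Real.pi_gt_three]

lemma std_image (hβ0 : 0 < β) (hβ1 : β ≤ 1 / 2) (hR : 0 < R) :
    pmap β R '' unitCircle = stdT β R := by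
  have hcos : 0 < Real.cos β := cos_pos_of_le_half hβ0 hβ1
  have hsin : 0 < Real.sin β := sin_pos_of_le_half hβ0 hβ1
  apply Set.Subset.antisymm
  · rintro _ ⟨x, hx, rfl⟩
    rw [mem_unitCircle_iff] at hx
    rcases le_or_gt 0 (R * Real.cos β + R * x 1) with h1 | h1
    · have hmax : max (R * Real.cos β + R * x 1) 0 = R * Real.cos β + R * x 1 := max_eq_left h1
      refine ⟨⟨?_, ?_⟩, ?_⟩
      · apply mem_closedBall_of_sq hR.le
        rw [pmap, hmax, ePt_zero, ePt_one, cen_zero, cen_one]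
        nlinarith [hx]
      · rw [pmap, hmax]
        simpa [ePt_one] using h1
      · rw [stdU]
        rintro ⟨hb, -⟩
        have hlt := sq_lt_of_mem_ball hb
        rw [pmap, hmax, ePt_zero, ePt_one, cen_zero, cen_one] at hlt
        nlinarith [hx, hlt]
    · have hmax : max (R * Real.cos β + R * x 1) 0 = 0 := max_eq_right h1.le
      have hx1 : x 1 + Real.cos β < 0 := by
        by_contra hcon
        push_neg at hcon
        nlinarith [mul_nonneg hR.le hcon]
      refine ⟨⟨?_, ?_⟩, ?_⟩
      · apply mem_closedBall_of_sq hR.le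
        rw [pmap, hmax, ePt_zero, ePt_one, cen_zero, cen_one]
        nlinarith [hx, sq_nonneg (x 1 + Real.cos β), sq_nonneg R,
          mul_pos (mul_pos hR hR) (mul_pos (by linarith : (0:ℝ) < -(x 1 + Real.cos β))
            (by linarith : (0:ℝ) < Real.cos β - x 1))]
      · rw [pmap, hmax]
        simp [ePt_one]
      · rw [stdU]
        rintro ⟨-, hpos⟩
        rw [pmap, hmax] at hpos
        simp [ePt_one] at hpos
  · rintro t ⟨⟨htb, ht1⟩, hnu⟩
    have ht1' : (0 : ℝ) ≤ t 1 := ht1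
    have hsq := sq_le_of_mem_closedBall htb
    rw [cen_zero, cen_one] at hsq
    by_cases hb : t ∈ Metric.ball (cen β R) R
    · have htz : t 1 = 0 := by
        by_contra h
        exact hnu ⟨hb, lt_of_le_of_ne ht1' (Ne.symm h)⟩
      have hchord : (t 0 - R * Real.sin β) ^ 2 + (R * Real.cos β) ^ 2 ≤ R ^ 2 := by
        rw [htz] at hsq
        nlinarith [hsq]
      have hwnn : (0:ℝ) ≤ R ^ 2 - (t 0 - R * Real.sin β) ^ 2 := by
        nlinarith [hchord, sq_nonneg (R * Real.cos β)]
      have hwsq : Real.sqrt (R ^ 2 - (t 0 - R * Real.sin β) ^ 2) ^ 2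
          = R ^ 2 - (t 0 - R * Real.sin β) ^ 2 := Real.sq_sqrt hwnn
      have hwge : R * Real.cos β ≤ Real.sqrt (R ^ 2 - (t 0 - R * Real.sin β) ^ 2) := by
        rw [show R * Real.cos β = Real.sqrt ((R * Real.cos β) ^ 2) from
          (Real.sqrt_sq (by positivity)).symm]
        apply Real.sqrt_le_sqrt
        nlinarith [hchord]
      refine ⟨ePt ((t 0 - R * Real.sin β) / R)
        (-(Real.sqrt (R ^ 2 - (t 0 - R * Real.sin β) ^ 2)) / R), ?_, ?_⟩
      · rw [mem_unitCircle_iff, ePt_zero, ePt_one]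
        field_simp <;> nlinarith [hwsq]
      · rw [pmap, ePt_zero, ePt_one]
        have e0 : R * Real.sin β + R * ((t 0 - R * Real.sin β) / R) = t 0 := by
          field_simp
          ring
        have e1 : R * Real.cos β
            + R * (-(Real.sqrt (R ^ 2 - (t 0 - R * Real.sin β) ^ 2)) / R)
            = R * Real.cos β - Real.sqrt (R ^ 2 - (t 0 - R * Real.sin β) ^ 2) := by
          field_simp
          ring
        rw [e0, e1, max_eq_right (by linarith : R * Real.cos β
            - Real.sqrt (R ^ 2 - (t 0 - R * Real.sin β) ^ 2) ≤ 0), ← htz]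
        exact ePt_eta t
    · have hsph : (t 0 - R * Real.sin β) ^ 2 + (t 1 - R * Real.cos β) ^ 2 = R ^ 2 := by
        have h2 : ¬ ((t 0 - cen β R 0) ^ 2 + (t 1 - cen β R 1) ^ 2 < R ^ 2) :=
          fun h => hb (mem_ball_of_sq hR.le h)
        rw [cen_zero, cen_one] at h2
        push_neg at h2
        linarith [hsq, h2]
      refine ⟨ePt ((t 0 - R * Real.sin β) / R) ((t 1 - R * Real.cos β) / R), ?_, ?_⟩
      · rw [mem_unitCircle_iff, ePt_zero, ePt_one]
        field_simp <;> nlinarith [hsph]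
      · rw [pmap, ePt_zero, ePt_one]
        have e0 : R * Real.sin β + R * ((t 0 - R * Real.sin β) / R) = t 0 := by field_simp; ring
        have e1 : R * Real.cos β + R * ((t 1 - R * Real.cos β) / R) = t 1 := by field_simp; ring
        rw [e0, e1, max_eq_left ht1']
        exact ePt_eta t

lemma std_inj (hβ0 : 0 < β) (hβ1 : β ≤ 1 / 2) (hR : 0 < R) :
    Set.InjOn (pmap β R) unitCircle := by
  have hcos : 0 < Real.cos β := cos_pos_of_le_half hβ0 hβ1
  intro x hx y hy h
  rw [mem_unitCircle_iff] at hx hy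
  have h0 : R * Real.sin β + R * x 0 = R * Real.sin β + R * y 0 := by
    have := congrArg (fun q : E2 => q 0) h
    rwa [pmap, pmap, ePt_zero, ePt_zero] at this
  have hx0 : x 0 = y 0 :=
    mul_left_cancel₀ hR.ne' (by linarith : R * x 0 = R * y 0)
  have hmax : max (R * Real.cos β + R * x 1) 0 = max (R * Real.cos β + R * y 1) 0 := by
    have := congrArg (fun q : E2 => q 1) h
    rwa [pmap, pmap, ePt_one, ePt_one] at this
  have hsq : x 1 ^ 2 = y 1 ^ 2 := by
    have h00 : x 0 ^ 2 = y 0 ^ 2 := by rw [hx0]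
    linarith [hx, hy, h00]
  by_cases hxy : x 1 = y 1
  · exact E2_ext hx0 hxy
  · exfalso
    have hneg : x 1 = - y 1 := by
      have h2 : (x 1 - y 1) * (x 1 + y 1) = 0 := by nlinarith [hsq]
      rcases mul_eq_zero.mp h2 with h3 | h3
      · exact absurd (by linarith : x 1 = y 1) hxy
      · linarith
    rcases lt_trichotomy (y 1) 0 with h1 | h1 | h1
    · have hp : 0 < R * Real.cos β + R * x 1 := by
        nlinarith [mul_pos hR hcos, mul_pos hR (show (0:ℝ) < x 1 by linarith)]
      rw [max_eq_left hp.le] at hmax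
      rcases le_or_gt (R * Real.cos β + R * y 1) 0 with h2 | h2
      · rw [max_eq_right h2] at hmax; linarith
      · rw [max_eq_left h2.le] at hmax
        have := mul_left_cancel₀ hR.ne' (by linarith : R * x 1 = R * y 1)
        linarith
    · exact hxy (by rw [hneg, h1, neg_zero])
    · have hp : 0 < R * Real.cos β + R * y 1 := by
        nlinarith [mul_pos hR hcos, mul_pos hR h1]
      rw [max_eq_left hp.le] at hmax
      rcases le_or_gt (R * Real.cos β + R * x 1) 0 with h2 | h2
      · rw [max_eq_right h2] at hmax; linarith
      · rw [max_eq_left h2.le] at hmax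
        have := mul_left_cancel₀ hR.ne' (by linarith : R * x 1 = R * y 1)
        linarith

end Std

end Aux
section Aux2

variable {β R : ℝ}

lemma cos_sin_dist (a b : ℝ) :
    (Real.cos a - Real.cos b) ^ 2 + (Real.sin a - Real.sin b) ^ 2 ≤ (a - b) ^ 2 := by
  have hc := Real.cos_sub a b
  have h1 := Real.sin_sq_add_cos_sq a
  have h2 := Real.sin_sq_add_cos_sq b
  have h3 := Real.one_sub_sq_div_two_le_cos (x := a - b)
  nlinarith [hc, h1, h2, h3]

lemma pmap_lip (hR : 0 ≤ R) (a b : ℝ) :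
    dist (pmap β R (ePt (Real.cos a) (Real.sin a))) (pmap β R (ePt (Real.cos b) (Real.sin b)))
      ≤ R * |a - b| := by
  rw [dist_eq_sqrt]
  simp only [pmap, ePt_zero, ePt_one]
  have hm := abs_max_sub_max_le_abs (R * Real.cos β + R * Real.sin a)
    (R * Real.cos β + R * Real.sin b) 0
  have hm2 : (max (R * Real.cos β + R * Real.sin a) 0 - max (R * Real.cos β + R * Real.sin b) 0) ^ 2
      ≤ (R * Real.sin a - R * Real.sin b) ^ 2 := by
    have h4 := pow_le_pow_left₀ (abs_nonneg _) hm 2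
    rw [sq_abs, sq_abs] at h4
    calc (max (R * Real.cos β + R * Real.sin a) 0 - max (R * Real.cos β + R * Real.sin b) 0) ^ 2
        ≤ (R * Real.cos β + R * Real.sin a - (R * Real.cos β + R * Real.sin b)) ^ 2 := h4
      _ = (R * Real.sin a - R * Real.sin b) ^ 2 := by ring
  have hmul := mul_le_mul_of_nonneg_left (cos_sin_dist a b) (sq_nonneg R)
  have key : (R * Real.sin β + R * Real.cos a - (R * Real.sin β + R * Real.cos b)) ^ 2
      + (max (R * Real.cos β + R * Real.sin a) 0 - max (R * Real.cos β + R * Real.sin b) 0) ^ 2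
      ≤ (R * |a - b|) ^ 2 := by
    have habs : (R * |a - b|) ^ 2 = R ^ 2 * (a - b) ^ 2 := by rw [mul_pow, sq_abs]
    nlinarith [hm2, hmul]
  calc Real.sqrt ((R * Real.sin β + R * Real.cos a - (R * Real.sin β + R * Real.cos b)) ^ 2
      + (max (R * Real.cos β + R * Real.sin a) 0 - max (R * Real.cos β + R * Real.sin b) 0) ^ 2)
      ≤ Real.sqrt ((R * |a - b|) ^ 2) := Real.sqrt_le_sqrt key
    _ = R * |a - b| := Real.sqrt_sq (by positivity)

lemma sum_tele (u : ℕ → ℝ) (hu : Monotone u) (C : ℝ) (hC : 0 ≤ C) (n : ℕ) :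
    ∑ i ∈ Finset.range n, ENNReal.ofReal (C * (u (i + 1) - u i))
      = ENNReal.ofReal (C * (u n - u 0)) := by
  induction n with
  | zero => simp
  | succ n ih =>
      rw [Finset.sum_range_succ, ih, ← ENNReal.ofReal_add
        (mul_nonneg hC (sub_nonneg.mpr (hu (Nat.zero_le n))))
        (mul_nonneg hC (sub_nonneg.mpr (hu (Nat.le_succ n))))]
      congr 1
      ring

lemma rawVar_le_of_lip {g : ℝ → E2} {C : ℝ} (hC : 0 ≤ C)
    (h : ∀ a b, dist (g a) (g b) ≤ C * |a - b|) :
    rawVar (fun a b : E2 => edist a b) g (Set.Icc 0 (2 * Real.pi))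
      ≤ ENNReal.ofReal (C * (2 * Real.pi)) := by
  apply iSup_le
  rintro ⟨n, u, hu, hmem⟩
  calc ∑ i ∈ Finset.range n, edist (g (u (i + 1))) (g (u i))
      ≤ ∑ i ∈ Finset.range n, ENNReal.ofReal (C * (u (i + 1) - u i)) := by
        apply Finset.sum_le_sum
        intro i _
        rw [edist_dist]
        apply ENNReal.ofReal_le_ofReal
        calc dist (g (u (i + 1))) (g (u i)) ≤ C * |u (i + 1) - u i| := h _ _
          _ = C * (u (i + 1) - u i) := by
              rw [abs_of_nonneg (sub_nonneg.mpr (hu (Nat.le_succ i)))]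
    _ = ENNReal.ofReal (C * (u n - u 0)) := sum_tele u hu C hC n
    _ ≤ _ := by
        apply ENNReal.ofReal_le_ofReal
        have h1 := hmem n
        have h2 := hmem 0
        rw [Set.mem_Icc] at h1 h2
        nlinarith [h1.2, h2.1]

lemma contEval (i : Fin 2) : Continuous fun q : E2 => q i :=
  (EuclideanSpace.proj (𝕜 := ℝ) i).continuous

lemma pmap_continuous : Continuous (pmap β R) := by
  have h0 : Continuous fun q : E2 => q 0 := contEval 0
  have h1 : Continuous fun q : E2 => q 1 := contEval 1
  unfold pmap ePt
  refine (PiLp.continuous_toLp 2 _).comp ?_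
  apply continuous_pi
  intro i
  fin_cases i
  · have hc : Continuous fun q : E2 => R * Real.sin β + R * q 0 :=
      continuous_const.add (continuous_const.mul h0)
    simpa using hc
  · simpa using (continuous_const.add (continuous_const.mul h1)).max continuous_const

lemma std_homeo (hβ0 : 0 < β) (hβ1 : β ≤ 1 / 2) (hR : 0 < R) :
    ∃ h : ↥unitCircle ≃ₜ ↥(stdT β R), ∀ x : ↥unitCircle, (h x : E2) = pmap β R x := by
  have himg := std_image hβ0 hβ1 hR
  have hinj := std_inj hβ0 hβ1 hR
  have hmem : ∀ x : ↥unitCircle, pmap β R x ∈ stdT β R := fun x =>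
    himg ▸ Set.mem_image_of_mem _ x.2
  have hbij : Function.Bijective (fun x : ↥unitCircle => (⟨pmap β R x, hmem x⟩ : ↥(stdT β R))) := by
    constructor
    · intro a b hab
      exact Subtype.ext (hinj a.2 b.2 (congrArg Subtype.val hab))
    · intro t
      have ht : (t : E2) ∈ pmap β R '' unitCircle := himg.symm ▸ t.2
      obtain ⟨x, hx, hxt⟩ := ht
      exact ⟨⟨x, hx⟩, Subtype.ext hxt⟩
  haveI : CompactSpace ↥unitCircle := isCompact_iff_compactSpace.mp (isCompact_sphere 0 1)
  have hce : Continuous (Equiv.ofBijective _ hbij) :=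
    Continuous.subtype_mk (pmap_continuous.comp continuous_subtype_val) _
  exact ⟨hce.homeoOfEquivCompactToT2, fun x => rfl⟩

lemma std_loopLen (hβ0 : 0 < β) (hβ1 : β ≤ 1 / 2) (hR : 0 < R) :
    setLoopLen (stdT β R) ≤ ENNReal.ofReal (2 * Real.pi * R) := by
  obtain ⟨h, hh⟩ := std_homeo hβ0 hβ1 hR
  refine le_trans (iInf_le _ h) ?_
  have hfun : (fun t => ((h (circlePt t)) : E2))
      = fun t => pmap β R (ePt (Real.cos t) (Real.sin t)) := by
    funext t
    rw [hh]
    rfl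
  rw [hfun]
  refine le_trans (rawVar_le_of_lip (C := R) hR.le (fun a b => pmap_lip hR.le a b))
    (le_of_eq ?_)
  congr 1
  ring

lemma std_isOpen_U : IsOpen (stdU β R) :=
  Metric.isOpen_ball.inter (isOpen_lt continuous_const (contEval 1))

lemma eval1_isLinear : IsLinearMap ℝ (fun q : E2 => q 1) :=
  ⟨fun _ _ => rfl, fun _ _ => rfl⟩

lemma std_isClosed_K : IsClosed (stdK β R) :=
  Metric.isClosed_closedBall.inter (isClosed_le continuous_const (contEval 1))

lemma std_U_subset_K : stdU β R ⊆ stdK β R := by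
  rintro q ⟨hb, h1⟩
  refine ⟨Metric.ball_subset_closedBall hb, ?_⟩
  show (0 : ℝ) ≤ q 1
  exact le_of_lt h1

lemma std_cen_mem_U (hβ0 : 0 < β) (hβ1 : β ≤ 1 / 2) (hR : 0 < R) : cen β R ∈ stdU β R := by
  refine ⟨Metric.mem_ball_self hR, ?_⟩
  show (0 : ℝ) < cen β R 1
  rw [cen_one]
  exact mul_pos hR (cos_pos_of_le_half hβ0 hβ1)

lemma std_compl (hβ0 : 0 < β) (hβ1 : β ≤ 1 / 2) (hR : 0 < R) :
    (stdT β R)ᶜ = stdU β R ∪ (stdK β R)ᶜ := by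
  rw [stdT, Set.diff_eq, Set.compl_inter, compl_compl, Set.union_comm]

lemma std_component (hβ0 : 0 < β) (hβ1 : β ≤ 1 / 2) (hR : 0 < R) :
    connectedComponentIn (stdT β R)ᶜ (cen β R) = stdU β R := by
  have hcU := std_cen_mem_U hβ0 hβ1 hR
  have hTU : stdU β R ⊆ (stdT β R)ᶜ := fun q hq hq' => hq'.2 hq
  have hcompl := std_compl hβ0 hβ1 hR (β := β) (R := R)
  apply subset_antisymm
  · apply IsPreconnected.subset_left_of_subset_union std_isOpen_U std_isClosed_K.isOpen_compl
    · exact Set.disjoint_left.mpr fun q hq hq2 => hq2 (std_U_subset_K hq)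
    · rw [← hcompl]
      exact connectedComponentIn_subset _ _
    · exact ⟨cen β R, mem_connectedComponentIn (hTU hcU), hcU⟩
    · exact isPreconnected_connectedComponentIn
  · exact IsPreconnected.subset_connectedComponentIn
      (((convex_ball _ _).inter (convex_halfSpace_gt eval1_isLinear 0)).isPreconnected)
      hcU hTU

end Aux2
section Aux3

variable {β R : ℝ}

lemma std_ball_volume (hR : 0 < R) :
    volume (Metric.ball (cen β R) R) = ENNReal.ofReal (Real.pi * R ^ 2) := by
  rw [EuclideanSpace.volume_ball, Fintype.card_fin]
  have h2 : ((2 : ℕ) : ℝ) / 2 + 1 = 2 := by norm_num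
  rw [h2, Real.Gamma_two, Real.sq_sqrt Real.pi_pos.le]
  rw [← ENNReal.ofReal_pow hR.le, ← ENNReal.ofReal_mul (by positivity)]
  rw [div_one]
  congr 1
  ring

set_option maxHeartbeats 1000000 in
lemma std_cap_volume (hβ0 : 0 < β) (hβ1 : β ≤ 1 / 2) (hR : 0 < R) :
    volume (Metric.ball (cen β R) R ∩ {q : E2 | q 1 ≤ 0}) ≤ ENNReal.ofReal (R ^ 2 * β ^ 3) := by
  have hcos : 0 < Real.cos β := cos_pos_of_le_half hβ0 hβ1
  have hsin : 0 < Real.sin β := sin_pos_of_le_half hβ0 hβ1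
  have hsub : Metric.ball (cen β R) R ∩ {q : E2 | q 1 ≤ 0}
      ⊆ (MeasurableEquiv.toLp 2 (Fin 2 → ℝ)).symm ⁻¹'
        (Set.Icc (![0, R * Real.cos β - R]) (![2 * R * Real.sin β, 0])) := by
    rintro q ⟨hqb, hq1⟩
    have hq1' : q 1 ≤ 0 := hq1
    have hsq := sq_lt_of_mem_ball hqb
    rw [cen_zero, cen_one] at hsq
    have c1 : 0 ≤ (-(q 1)) * (2 * (R * Real.cos β) - q 1) := by
      apply mul_nonneg (by linarith)
      nlinarith [mul_pos hR hcos]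
    have hx0l : 0 ≤ q 0 := by
      nlinarith [hsq, c1, Real.sin_sq_add_cos_sq β, sq_nonneg R, mul_pos hR hsin]
    have hx0r : q 0 ≤ 2 * R * Real.sin β := by
      nlinarith [hsq, c1, Real.sin_sq_add_cos_sq β, sq_nonneg R, mul_pos hR hsin, hx0l]
    have hx1l : R * Real.cos β - R ≤ q 1 := by
      nlinarith [hsq, sq_nonneg (q 0 - R * Real.sin β), sq_nonneg (q 1 - R * Real.cos β + R)]
    refine Set.mem_preimage.mpr (Set.mem_Icc.mpr ⟨fun i => ?_, fun i => ?_⟩)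
    · fin_cases i
      · show (0 : ℝ) ≤ q 0
        exact hx0l
      · show R * Real.cos β - R ≤ q 1
        exact hx1l
    · fin_cases i
      · show q 0 ≤ 2 * R * Real.sin β
        exact hx0r
      · show q 1 ≤ (0 : ℝ)
        exact hq1'
  calc volume (Metric.ball (cen β R) R ∩ {q : E2 | q 1 ≤ 0})
      ≤ volume ((MeasurableEquiv.toLp 2 (Fin 2 → ℝ)).symm ⁻¹'
          (Set.Icc (![0, R * Real.cos β - R]) (![2 * R * Real.sin β, 0]))) :=
        measure_mono hsub
    _ = volume (Set.Icc (![0, R * Real.cos β - R]) (![2 * R * Real.sin β, 0])) :=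
        (EuclideanSpace.volume_preserving_symm_measurableEquiv_toLp (Fin 2)).measure_preimage_equiv _
    _ ≤ ENNReal.ofReal (R ^ 2 * β ^ 3) := by
        rw [Real.volume_Icc_pi, Fin.prod_univ_two]
        simp only [Matrix.cons_val_zero, Matrix.cons_val_one, Matrix.head_cons]
        rw [← ENNReal.ofReal_mul (by nlinarith [mul_pos hR hsin])]
        apply ENNReal.ofReal_le_ofReal
        have h1 : Real.sin β * (1 - Real.cos β) ≤ β * (β ^ 2 / 2) := by
          apply mul_le_mul (Real.sin_le hβ0.le) _ _ hβ0.le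
          · linarith [Real.one_sub_sq_div_two_le_cos (x := β)]
          · linarith [Real.cos_le_one β]
        nlinarith [mul_le_mul_of_nonneg_left h1 (by positivity : (0:ℝ) ≤ 2 * R ^ 2)]

lemma std_volume (hβ0 : 0 < β) (hβ1 : β ≤ 1 / 2) (hR : 0 < R) :
    ENNReal.ofReal (Real.pi * R ^ 2 - R ^ 2 * β ^ 3) ≤ volume (stdU β R) := by
  have hsplit : Metric.ball (cen β R) R
      ⊆ stdU β R ∪ (Metric.ball (cen β R) R ∩ {q : E2 | q 1 ≤ 0}) := by
    intro q hq
    rcases lt_or_ge 0 (q 1) with h | h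
    · exact Or.inl ⟨hq, h⟩
    · exact Or.inr ⟨hq, h⟩
  have key : ENNReal.ofReal (Real.pi * R ^ 2)
      ≤ volume (stdU β R) + ENNReal.ofReal (R ^ 2 * β ^ 3) := by
    rw [← std_ball_volume hR]
    refine le_trans (measure_mono hsplit) (le_trans (measure_union_le _ _) ?_)
    exact add_le_add_right (std_cap_volume hβ0 hβ1 hR) _
  have hb2 : β ^ 2 ≤ 1 / 4 := by nlinarith
  have hb3 : β ^ 3 ≤ 1 / 8 := by nlinarith [hb2]
  have hnn : 0 ≤ Real.pi * R ^ 2 - R ^ 2 * β ^ 3 := by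
    nlinarith [Real.pi_gt_three, sq_nonneg R, hb3]
  have hsum : ENNReal.ofReal (Real.pi * R ^ 2 - R ^ 2 * β ^ 3) + ENNReal.ofReal (R ^ 2 * β ^ 3)
      = ENNReal.ofReal (Real.pi * R ^ 2) := by
    rw [← ENNReal.ofReal_add hnn (by positivity)]
    congr 1
    ring
  rw [← hsum] at key
  exact (ENNReal.add_le_add_iff_right ENNReal.ofReal_ne_top).mp key

set_option maxHeartbeats 1000000 in
lemma std_sector (hβ0 : 0 < β) (hβ1 : β ≤ 1 / 2) (hR : 0 < R) :
    stdK β R ⊆ sector (Real.pi - β) := by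
  have hcos : 0 < Real.cos β := cos_pos_of_le_half hβ0 hβ1
  have hsin : 0 < Real.sin β := sin_pos_of_le_half hβ0 hβ1
  have hβπ : β < Real.pi := by nlinarith [Real.pi_gt_three]
  rintro q ⟨hqb, hq1⟩
  have hq1' : (0 : ℝ) ≤ q 1 := hq1
  have hsq := sq_le_of_mem_closedBall hqb
  rw [cen_zero, cen_one] at hsq
  by_cases hq : q 0 ^ 2 + q 1 ^ 2 = 0
  · refine ⟨0, 0, le_refl 0, le_refl 0, by linarith, ?_⟩
    have h0 : q 0 = 0 := by nlinarith [sq_nonneg (q 0), sq_nonneg (q 1)]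
    have h1 : q 1 = 0 := by nlinarith [sq_nonneg (q 0), sq_nonneg (q 1)]
    have h2 : ePt ((0:ℝ) * Real.cos 0) ((0:ℝ) * Real.sin 0) = ePt 0 0 := by norm_num
    rw [h2, ← ePt_eta q, h0, h1]
  · have hpos : 0 < q 0 ^ 2 + q 1 ^ 2 :=
      lt_of_le_of_ne (by positivity) (Ne.symm hq)
    set r := Real.sqrt (q 0 ^ 2 + q 1 ^ 2) with hr
    have hrpos : 0 < r := Real.sqrt_pos.mpr hpos
    have hr2 : r ^ 2 = q 0 ^ 2 + q 1 ^ 2 := Real.sq_sqrt hpos.le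
    have habs : q 0 ^ 2 ≤ r ^ 2 := by nlinarith [sq_nonneg (q 1)]
    have hq0r : -r ≤ q 0 ∧ q 0 ≤ r := by constructor <;> nlinarith [habs, hrpos]
    have hd1 : -1 ≤ q 0 / r := by rw [le_div_iff₀ hrpos]; linarith [hq0r.1]
    have hd2 : q 0 / r ≤ 1 := by rw [div_le_iff₀ hrpos]; linarith [hq0r.2]
    have hcosθ : Real.cos (Real.arccos (q 0 / r)) = q 0 / r := Real.cos_arccos hd1 hd2
    have hsinθ : Real.sin (Real.arccos (q 0 / r)) = q 1 / r := by
      rw [Real.sin_arccos]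
      have he : 1 - (q 0 / r) ^ 2 = (q 1 / r) ^ 2 := by
        field_simp
        linarith [hr2]
      rw [he, Real.sqrt_sq (by positivity)]
    -- the angle bound
    have hkey : -(Real.cos β) ≤ q 0 / r := by
      by_contra hcon
      push_neg at hcon
      have hq0 : q 0 < -r * Real.cos β := by
        rw [div_lt_iff₀ hrpos] at hcon
        linarith [hcon]
      have hA : 0 < -q 0 - r * Real.cos β := by linarith
      have hB : 0 < -q 0 + r * Real.cos β := by nlinarith [mul_pos hrpos hcos]
      have hq0sq : r ^ 2 * Real.cos β ^ 2 < q 0 ^ 2 := by nlinarith [mul_pos hA hB]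
      have hq1sq : q 1 ^ 2 < (r * Real.sin β) ^ 2 := by
        nlinarith [hq0sq, hr2, Real.sin_sq_add_cos_sq β, sq_nonneg r]
      have hq1lt : q 1 < r * Real.sin β := by
        nlinarith [hq1sq, hq1', mul_pos hrpos hsin]
      have hball : q 0 ^ 2 + q 1 ^ 2
          ≤ 2 * (q 0 * (R * Real.sin β) + q 1 * (R * Real.cos β)) := by
        nlinarith [hsq, Real.sin_sq_add_cos_sq β, sq_nonneg R]
      have e1 : q 0 * Real.sin β < -r * Real.cos β * Real.sin β :=
        mul_lt_mul_of_pos_right hq0 hsin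
      have e2 : q 1 * Real.cos β < r * Real.sin β * Real.cos β :=
        mul_lt_mul_of_pos_right hq1lt hcos
      nlinarith [hball, mul_lt_mul_of_pos_left e1 hR, mul_lt_mul_of_pos_left e2 hR, hpos]
    have hθle : Real.arccos (q 0 / r) ≤ Real.pi - β := by
      by_contra hcon2
      push_neg at hcon2
      have h1 : Real.cos (Real.arccos (q 0 / r)) < Real.cos (Real.pi - β) :=
        Real.strictAntiOn_cos ⟨by linarith, by linarith⟩
          ⟨Real.arccos_nonneg _, Real.arccos_le_pi _⟩ hcon2
      rw [hcosθ, Real.cos_pi_sub] at h1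
      linarith [hkey]
    refine ⟨r, Real.arccos (q 0 / r), hrpos.le, Real.arccos_nonneg _, hθle, ?_⟩
    rw [hcosθ, hsinθ]
    rw [show r * (q 0 / r) = q 0 by field_simp, show r * (q 1 / r) = q 1 by field_simp]
    exact (ePt_eta q).symm

lemma std_chord (hβ0 : 0 < β) (hβ1 : β ≤ 1 / 2) (hR : 0 < R) {t : ℝ}
    (ht : t ∈ Set.Icc (0 : ℝ) (2 * R * Real.sin β)) : ePt t 0 ∈ stdT β R := by
  obtain ⟨ht0, ht1⟩ := ht
  refine ⟨⟨?_, ?_⟩, ?_⟩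
  · apply mem_closedBall_of_sq hR.le
    rw [ePt_zero, ePt_one, cen_zero, cen_one]
    nlinarith [Real.sin_sq_add_cos_sq β, sq_nonneg R,
      mul_nonneg ht0 (by linarith : (0:ℝ) ≤ 2 * R * Real.sin β - t)]
  · show (0 : ℝ) ≤ ePt t 0 1
    norm_num [ePt_one]
  · rintro ⟨-, hpos⟩
    have : (0 : ℝ) < ePt t 0 1 := hpos
    rw [ePt_one] at this
    exact lt_irrefl 0 this

end Aux3
section Aux4

lemma isom_measurePreserving (ψ : E2 ≃ᵢ E2) :
    MeasurePreserving (ψ : E2 → E2) volume volume := by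
  have happ : (ψ : E2 → E2)
      = (fun y => y + ψ 0) ∘ (ψ.toRealLinearIsometryEquiv : E2 → E2) := by
    funext x
    simp only [Function.comp_apply, IsometryEquiv.toRealLinearIsometryEquiv_apply]
    abel
  rw [happ]
  exact (measurePreserving_add_right volume (ψ 0)).comp
    ψ.toRealLinearIsometryEquiv.measurePreserving

lemma isom_volume (ψ : E2 ≃ᵢ E2) (S : Set E2) : volume ((ψ : E2 → E2) '' S) = volume S := by
  have h1 : (ψ : E2 → E2) '' S = (ψ.symm : E2 → E2) ⁻¹' S := by
    ext x
    constructor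
    · rintro ⟨y, hy, rfl⟩
      simpa [ψ.symm_apply_apply] using hy
    · intro h
      exact ⟨ψ.symm x, h, ψ.apply_symm_apply x⟩
  rw [h1]
  have hcoe : (⇑(ψ.symm.toHomeomorph.toMeasurableEquiv) : E2 → E2) = ⇑ψ.symm := rfl
  rw [← hcoe]
  exact MeasurePreserving.measure_preimage_equiv
    (f := ψ.symm.toHomeomorph.toMeasurableEquiv) (isom_measurePreserving ψ.symm) S

lemma rawVar_isom (ψ : E2 ≃ᵢ E2) (f : ℝ → E2) (s : Set ℝ) :
    rawVar (fun a b : E2 => edist a b) (fun t => ψ (f t)) s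
      = rawVar (fun a b : E2 => edist a b) f s := by
  rw [rawVar, rawVar]
  apply iSup_congr
  intro p
  apply Finset.sum_congr rfl
  intro i _
  exact ψ.isometry.edist_eq _ _

lemma setLoopLen_isom_le (ψ : E2 ≃ᵢ E2) (T : Set E2) :
    setLoopLen ((ψ : E2 → E2) '' T) ≤ setLoopLen T := by
  apply le_iInf
  intro h
  refine iInf_le_of_le (h.trans (ψ.toHomeomorph.image T)) (le_of_eq ?_)
  exact rawVar_isom ψ (fun t => ((h (circlePt t)) : E2)) _

/-- Rotation by `α` composed with reflection: an isometric involution of the plane. -/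
def rotRefFun (α : ℝ) (q : E2) : E2 :=
  ePt (q 0 * Real.cos α + q 1 * Real.sin α) (q 0 * Real.sin α - q 1 * Real.cos α)

lemma rotRefFun_invol (α : ℝ) (q : E2) : rotRefFun α (rotRefFun α q) = q := by
  have h := Real.sin_sq_add_cos_sq α
  refine E2_ext ?_ ?_
  · simp only [rotRefFun, ePt_zero, ePt_one]
    linear_combination (q 0) * h
  · simp only [rotRefFun, ePt_zero, ePt_one]
    linear_combination (q 1) * h

def rotRef (α : ℝ) : E2 ≃ᵢ E2 where
  toEquiv := ⟨rotRefFun α, rotRefFun α, fun q => rotRefFun_invol α q,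
    fun q => rotRefFun_invol α q⟩
  isometry_toFun := Isometry.of_dist_eq (fun p q => by
    have h := Real.sin_sq_add_cos_sq α
    show dist (rotRefFun α p) (rotRefFun α q) = dist p q
    rw [dist_eq_sqrt, dist_eq_sqrt]
    congr 1
    simp only [rotRefFun, ePt_zero, ePt_one]
    linear_combination ((p 0 - q 0) ^ 2 + (p 1 - q 1) ^ 2) * h)

lemma rotRef_apply (α : ℝ) (q : E2) : (rotRef α) q = rotRefFun α q := rfl

lemma rotRef_ray (α t : ℝ) :
    rotRefFun α (ePt t 0) = ePt (t * Real.cos α) (t * Real.sin α) := by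
  refine E2_ext ?_ ?_ <;> simp only [rotRefFun, ePt_zero, ePt_one] <;> ring

lemma rotRef_sector {α b : ℝ} (hb : 0 ≤ b) (hba : b ≤ α) :
    rotRefFun α '' sector b ⊆ sector α := by
  rintro _ ⟨q, ⟨r, θ, hr, hθ0, hθb, rfl⟩, rfl⟩
  refine ⟨r, α - θ, hr, by linarith, by linarith, ?_⟩
  refine (E2_ext ?_ ?_).symm <;>
    simp only [rotRefFun, ePt_zero, ePt_one, Real.cos_sub, Real.sin_sub] <;> ring

lemma sector_mono {a b : ℝ} (h : a ≤ b) : sector a ⊆ sector b := by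
  rintro q ⟨r, θ, h1, h2, h3, rfl⟩
  exact ⟨r, θ, h1, h2, le_trans h3 h, rfl⟩

end Aux4
set_option maxHeartbeats 1000000 in
/-- **Euclidean domains of almost isoperimetric equality.**
For every `ε > 0` there are `L > 0` and `δ > 0` with the following property.  Let `H ⊆ ℝ²` be
a hinge of angle `α ≥ π - δ` (with `α ≤ 2π`) with vertex `p`, and let `γ` be one of the two
rays bounding `H`.  Then for every `s > 0` there is a Jordan curve `T_s ⊆ H` with Jordan
domain `J_s` such that: (1) `T_s` contains the initial segment `γ([0,s])`;
(2) `ℓ(T_s) ≤ L·s`; (3) `ℓ(T_s) - √(4π·H²(J_s)) < ε·s`. -/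
theorem euclidean_hinge_almost_isoperimetric (ε : ℝ) (hε : 0 < ε) :
    ∃ L δ : ℝ, 0 < L ∧ 0 < δ ∧
      ∀ α : ℝ, Real.pi - δ ≤ α → α ≤ 2 * Real.pi →
      ∀ (φ : E2 ≃ᵢ E2) (γ : ℝ → E2),
        ((γ = fun s => φ (ePt s 0)) ∨
          (γ = fun s => φ (ePt (s * Real.cos α) (s * Real.sin α)))) →
        ∀ s : ℝ, 0 < s →
          ∃ T J : Set E2,
            T ⊆ φ '' sector α ∧
            Nonempty (↥unitCircle ≃ₜ ↥T) ∧
            (∃ x ∈ Tᶜ, J = connectedComponentIn Tᶜ x) ∧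
            Bornology.IsBounded J ∧
            γ '' Icc 0 s ⊆ T ∧
            setLoopLen T ≤ ENNReal.ofReal (L * s) ∧
            setLoopLen T <
              (ENNReal.ofReal (4 * Real.pi) * volume J) ^ (1 / 2 : ℝ) +
                ENNReal.ofReal (ε * s) := by
  have hε2 : 0 < Real.sqrt ε := Real.sqrt_pos.mpr hε
  set β := min 1 (Real.sqrt ε) / 2 with hβdef
  have hβ0 : 0 < β := div_pos (lt_min one_pos hε2) two_pos
  have hβ1 : β ≤ 1 / 2 := by
    have h := min_le_left 1 (Real.sqrt ε)
    rw [hβdef]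
    linarith
  have hβε : β ^ 2 * 2 < ε := by
    have h1 : β ≤ Real.sqrt ε / 2 := by
      have h := min_le_right 1 (Real.sqrt ε)
      rw [hβdef]
      linarith
    have h2 : β ^ 2 ≤ (Real.sqrt ε / 2) ^ 2 := by nlinarith [hβ0.le]
    have h3 : Real.sqrt ε ^ 2 = ε := Real.sq_sqrt hε.le
    nlinarith [hε]
  have hsin : 0 < Real.sin β := sin_pos_of_le_half hβ0 hβ1
  have hcos : 0 < Real.cos β := cos_pos_of_le_half hβ0 hβ1
  refine ⟨Real.pi / Real.sin β, β, div_pos Real.pi_pos hsin, hβ0, ?_⟩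
  intro α hα1 hα2 φ γ hγ s hs
  set R := s / (2 * Real.sin β) with hRdef
  have hR : 0 < R := div_pos hs (by positivity)
  have hsR : 2 * R * Real.sin β = s := by
    rw [hRdef]
    field_simp
  have hβπ : (0 : ℝ) ≤ Real.pi - β := by nlinarith [Real.pi_gt_three]
  obtain ⟨ψ, hψsec, hψγ⟩ : ∃ ψ : E2 ≃ᵢ E2,
      ((ψ : E2 → E2) '' sector (Real.pi - β) ⊆ (φ : E2 → E2) '' sector α)
        ∧ ∀ t : ℝ, γ t = ψ (ePt t 0) := by
    rcases hγ with h | h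
    · exact ⟨φ, Set.image_mono (sector_mono (by linarith)), fun t => by rw [h]⟩
    · refine ⟨(rotRef α).trans φ, ?_, fun t => ?_⟩
      · have himg : (((rotRef α).trans φ : E2 ≃ᵢ E2) : E2 → E2) '' sector (Real.pi - β)
            = (φ : E2 → E2) '' (rotRefFun α '' sector (Real.pi - β)) := by
          rw [← Set.image_comp]
          rfl
        rw [himg]
        exact Set.image_mono (rotRef_sector hβπ (by linarith))
      · rw [h]
        show φ (ePt (t * Real.cos α) (t * Real.sin α)) = φ ((rotRef α) (ePt t 0))
        rw [rotRef_apply, rotRef_ray]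
  have hcenc : cen β R ∈ (stdT β R)ᶜ := fun hq' => hq'.2 (std_cen_mem_U hβ0 hβ1 hR)
  refine ⟨(ψ : E2 → E2) '' stdT β R, (ψ : E2 → E2) '' stdU β R, ?_, ?_, ?_, ?_, ?_, ?_, ?_⟩
  · -- T ⊆ φ '' sector α
    refine subset_trans (Set.image_mono ?_) hψsec
    exact subset_trans (fun q hq => hq.1) (std_sector hβ0 hβ1 hR)
  · -- Jordan curve
    obtain ⟨h, -⟩ := std_homeo hβ0 hβ1 hR
    exact ⟨h.trans (ψ.toHomeomorph.image (stdT β R))⟩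
  · -- Jordan domain
    refine ⟨ψ (cen β R), ?_, ?_⟩
    · rw [← Set.image_compl_eq ψ.bijective]
      exact Set.mem_image_of_mem _ hcenc
    · have h1 := Homeomorph.image_connectedComponentIn (ψ.toHomeomorph) hcenc
      rw [std_component hβ0 hβ1 hR] at h1
      rw [IsometryEquiv.coe_toHomeomorph] at h1
      rw [Set.image_compl_eq ψ.bijective] at h1
      exact h1
  · -- bounded
    have hsub : (ψ : E2 → E2) '' stdU β R ⊆ (ψ : E2 → E2) '' Metric.ball (cen β R) R :=
      Set.image_mono Set.inter_subset_left
    rw [IsometryEquiv.image_ball] at hsub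
    exact Metric.isBounded_ball.subset hsub
  · -- contains the segment
    rintro _ ⟨t, ht, rfl⟩
    rw [hψγ t]
    apply Set.mem_image_of_mem
    apply std_chord hβ0 hβ1 hR
    rw [hsR]
    exact ht
  · -- length bound
    refine le_trans (setLoopLen_isom_le ψ _) (le_trans (std_loopLen hβ0 hβ1 hR) ?_)
    apply le_of_eq
    congr 1
    rw [hRdef]
    field_simp
  · -- isoperimetric almost-equality
    have hlen := le_trans (setLoopLen_isom_le ψ _) (std_loopLen hβ0 hβ1 hR)
    have hvol : ENNReal.ofReal (Real.pi * R ^ 2 - R ^ 2 * β ^ 3)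
        ≤ volume ((ψ : E2 → E2) '' stdU β R) := by
      rw [isom_volume]
      exact std_volume hβ0 hβ1 hR
    have hb2 : β ^ 2 ≤ 1 / 4 := by nlinarith
    have hb3 : β ^ 3 ≤ 1 / 8 := by nlinarith [hb2]
    have hπβ : 0 < Real.pi - β ^ 3 := by nlinarith [Real.pi_gt_three]
    have hX : (0 : ℝ) < 4 * Real.pi * (Real.pi * R ^ 2 - R ^ 2 * β ^ 3) := by
      have h7 : (0 : ℝ) < R ^ 2 * (Real.pi - β ^ 3) := mul_pos (by positivity) hπβ
      nlinarith [Real.pi_pos, h7]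
    have hsqrt : ENNReal.ofReal (2 * R * (Real.pi - β ^ 3))
        ≤ (ENNReal.ofReal (4 * Real.pi) * volume ((ψ : E2 → E2) '' stdU β R)) ^ (1 / 2 : ℝ) := by
      calc ENNReal.ofReal (2 * R * (Real.pi - β ^ 3))
          ≤ ENNReal.ofReal ((4 * Real.pi * (Real.pi * R ^ 2 - R ^ 2 * β ^ 3)) ^ (1 / 2 : ℝ)) := by
            apply ENNReal.ofReal_le_ofReal
            rw [← Real.sqrt_eq_rpow]
            rw [show 4 * Real.pi * (Real.pi * R ^ 2 - R ^ 2 * β ^ 3)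
                = 4 * Real.pi * R ^ 2 * (Real.pi - β ^ 3) by ring]
            refine (Real.le_sqrt (by positivity) (by nlinarith [Real.pi_pos])).mpr ?_
            nlinarith [mul_nonneg (mul_nonneg (by positivity : (0:ℝ) ≤ 4 * R ^ 2) hπβ.le)
              (by positivity : (0:ℝ) ≤ β ^ 3)]
        _ = (ENNReal.ofReal (4 * Real.pi * (Real.pi * R ^ 2 - R ^ 2 * β ^ 3))) ^ (1 / 2 : ℝ) :=
            (ENNReal.ofReal_rpow_of_pos hX).symm
        _ ≤ _ := by
            apply ENNReal.rpow_le_rpow _ (by norm_num)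
            rw [ENNReal.ofReal_mul (by positivity)]
            exact mul_le_mul_right hvol _
    have hstrict : ENNReal.ofReal (2 * Real.pi * R)
        < ENNReal.ofReal (2 * R * (Real.pi - β ^ 3)) + ENNReal.ofReal (ε * s) := by
      rw [← ENNReal.ofReal_add (by positivity) (by positivity)]
      apply (ENNReal.ofReal_lt_ofReal_iff_of_nonneg (by positivity)).mpr
      have hsin2 : β / 2 ≤ Real.sin β := by
        have hms := Real.mul_le_sin (x := β) hβ0.le (by nlinarith [Real.pi_gt_three])
        have hd : (1 : ℝ) / 2 * β ≤ 2 / Real.pi * β := by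
          apply mul_le_mul_of_nonneg_right _ hβ0.le
          rw [div_le_div_iff₀ (by norm_num) Real.pi_pos]
          nlinarith [Real.pi_le_four]
        linarith
      have hβ3 : β ^ 3 < ε * Real.sin β := by
        calc β ^ 3 = β ^ 2 * β := by ring
          _ < ε / 2 * β := by
              apply mul_lt_mul_of_pos_right _ hβ0
              linarith
          _ ≤ ε * Real.sin β := by nlinarith [mul_le_mul_of_nonneg_left hsin2 hε.le]
      have h5 : 2 * R * β ^ 3 < 2 * R * (ε * Real.sin β) :=
        mul_lt_mul_of_pos_left hβ3 (by positivity)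
      have h6 : ε * (2 * R * Real.sin β) = ε * s := by rw [hsR]
      nlinarith [h5, h6]
    calc setLoopLen ((ψ : E2 → E2) '' stdT β R) ≤ ENNReal.ofReal (2 * Real.pi * R) := hlen
      _ < ENNReal.ofReal (2 * R * (Real.pi - β ^ 3)) + ENNReal.ofReal (ε * s) := hstrict
      _ ≤ _ := add_le_add_left hsqrt _

end IsoCat
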